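/- Let M and M̂ be as in the single-component specialization construction. Suppose (λ, u) is an eigenpair of M (viewed as a complex matrix) with λ not a root of the characteristic polynomial of Z, and suppose v satisfies M̂ v = λ v with v_B = u_B. Then for each fixed i ∈ {1,…,y}, summing the eigenvector components over all copies of Z with the same outgoing block Y_i recovers the original eigenvector component on Z: Σ_{j=1}^{w} v_{(i,j)} = u_C, where u_C is the restriction of u to the C-block of M. -/

import Mathlib

open Matrix

/-- The single-component specialization `M̂` of the block matrix `M = [[U, ΣY_i],[ΣW_j, Z]]`:
indices `B ⊕ (P × C)` with `P = Fin y × Fin w`; its `(B,B)` block is `U`, its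
`(B, {(i,j)}×C)` block is `Y i`, its `({(i,j)}×C, B)` block is `W j`, its diagonal
`({(i,j)}×C, {(i,j)}×C)` blocks are `Z`, and all blocks between distinct copies are zero. -/
def specialization {l m y w : ℕ}
    (U : Matrix (Fin l) (Fin l) ℝ) (Z : Matrix (Fin m) (Fin m) ℝ)
    (Y : Fin y → Matrix (Fin l) (Fin m) ℝ) (W : Fin w → Matrix (Fin m) (Fin l) ℝ) :
    Matrix (Fin l ⊕ ((Fin y × Fin w) × Fin m)) (Fin l ⊕ ((Fin y × Fin w) × Fin m)) ℝ :=
  fun r c =>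
    match r, c with
    | Sum.inl a, Sum.inl b => U a b
    | Sum.inl a, Sum.inr ((i, _), c') => Y i a c'
    | Sum.inr ((_, j), r'), Sum.inl b => W j r' b
    | Sum.inr (p, r'), Sum.inr (q, c') => if p = q then Z r' c' else 0

/-- The original block matrix `M = [[U, Y],[W, Z]]` with `Y = ΣY_i`, `W = ΣW_j`. -/
def origMatrix {l m y w : ℕ}
    (U : Matrix (Fin l) (Fin l) ℝ) (Z : Matrix (Fin m) (Fin m) ℝ)
    (Y : Fin y → Matrix (Fin l) (Fin m) ℝ) (W : Fin w → Matrix (Fin m) (Fin l) ℝ) :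
    Matrix (Fin l ⊕ Fin m) (Fin l ⊕ Fin m) ℝ :=
  Matrix.fromBlocks U (∑ i, Y i) (∑ j, W j) Z

/-- if `(λ, u)` is an eigenpair of `M` (as a complex matrix), `λ` is not a
root of the characteristic polynomial of `Z`, and `M̂ v = λ v` with `v_B = u_B`, then for
each fixed `i`, summing the components of `v` over all copies of `Z` with the same outgoing
block `Y_i` recovers `u_C`: `Σⱼ v_{(i,j)} = u_C`. -/
theorem specialization_eigenvector_sum
    {l m y w : ℕ} (hl : 1 ≤ l) (hm : 1 ≤ m) (hy : 1 ≤ y) (hw : 1 ≤ w)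
    (U : Matrix (Fin l) (Fin l) ℝ) (Z : Matrix (Fin m) (Fin m) ℝ)
    (Y : Fin y → Matrix (Fin l) (Fin m) ℝ) (W : Fin w → Matrix (Fin m) (Fin l) ℝ)
    (lam : ℂ) (u : (Fin l ⊕ Fin m) → ℂ) (hu : u ≠ 0)
    (heigM : ((origMatrix U Z Y W).map Complex.ofReal).mulVec u = lam • u)
    (hlam : Polynomial.eval lam (Matrix.charpoly (Z.map Complex.ofReal)) ≠ 0)
    (v : (Fin l ⊕ ((Fin y × Fin w) × Fin m)) → ℂ)
    (heigv : ((specialization U Z Y W).map Complex.ofReal).mulVec v = lam • v)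
    (hvB : ∀ b : Fin l, v (Sum.inl b) = u (Sum.inl b)) :
    ∀ (i : Fin y) (c : Fin m),
      ∑ j : Fin w, v (Sum.inr ((i, j), c)) = u (Sum.inr c) := by
  intro i c0
  set Zc := Z.map Complex.ofReal with hZc
  -- invertibility of `lam • 1 - Zc`
  have hdet : (lam • (1 : Matrix (Fin m) (Fin m) ℂ) - Zc).det ≠ 0 := by
    rw [Matrix.charpoly, ← Polynomial.coe_evalRingHom, RingHom.map_det] at hlam
    convert hlam using 2
    ext a b
    by_cases h : a = b <;>
      simp [h, charmatrix_apply, Matrix.one_apply, Matrix.diagonal_apply, Matrix.sub_apply, hZc]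
  -- row equations of the specialization at copies (i, j)
  have h1 : ∀ (j : Fin w) (c : Fin m),
      (∑ b, (W j c b : ℂ) * v (Sum.inl b))
        + ∑ c', (Z c c' : ℂ) * v (Sum.inr ((i, j), c'))
        = lam * v (Sum.inr ((i, j), c)) := by
    intro j c
    have h := congrFun heigv (Sum.inr ((i, j), c))
    simpa [mulVec, dotProduct, specialization, Fintype.sum_sum_type, Fintype.sum_prod_type,
      ite_mul, apply_ite, Finset.sum_ite_eq, Finset.sum_ite_eq'] using h
  -- row equation of the original matrix at C
  have h2 : ∀ c : Fin m,
      (∑ j : Fin w, ∑ b, (W j c b : ℂ) * u (Sum.inl b))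
        + ∑ c', (Z c c' : ℂ) * u (Sum.inr c') = lam * u (Sum.inr c) := by
    intro c
    have h := congrFun heigM (Sum.inr c)
    simp only [origMatrix, mulVec, dotProduct, Fintype.sum_sum_type, fromBlocks,
      Matrix.map_apply, Matrix.of_apply, Sum.elim_inl, Sum.elim_inr, Matrix.sum_apply,
      Complex.ofReal_sum, Finset.sum_mul, Pi.smul_apply, smul_eq_mul] at h
    rw [Finset.sum_comm] at h
    exact h
  -- the difference vector
  set d : Fin m → ℂ := fun c => (∑ j : Fin w, v (Sum.inr ((i, j), c))) - u (Sum.inr c) with hd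
  have hAd : (lam • (1 : Matrix (Fin m) (Fin m) ℂ) - Zc).mulVec d = 0 := by
    funext c
    have hsum : (∑ j : Fin w, ∑ b, (W j c b : ℂ) * u (Sum.inl b))
        + ∑ c', (Z c c' : ℂ) * (∑ j : Fin w, v (Sum.inr ((i, j), c')))
        = lam * ∑ j : Fin w, v (Sum.inr ((i, j), c)) := by
      have h : ∑ j : Fin w, ((∑ b, (W j c b : ℂ) * v (Sum.inl b))
          + ∑ c', (Z c c' : ℂ) * v (Sum.inr ((i, j), c')))
          = ∑ j : Fin w, lam * v (Sum.inr ((i, j), c)) :=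
        Finset.sum_congr rfl fun j _ => h1 j c
      have hswap : ∑ c', (Z c c' : ℂ) * (∑ j : Fin w, v (Sum.inr ((i, j), c')))
          = ∑ j : Fin w, ∑ c', (Z c c' : ℂ) * v (Sum.inr ((i, j), c')) := by
        simp_rw [Finset.mul_sum]
        exact Finset.sum_comm
      simp only [hvB] at h
      rw [Finset.sum_add_distrib] at h
      rw [hswap, Finset.mul_sum]
      exact h
    have h2c := h2 c
    have key : ∑ c', (Z c c' : ℂ) * d c' = lam * d c := by
      simp only [hd, mul_sub, Finset.sum_sub_distrib]
      linear_combination hsum - h2c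
    show ∑ c', (lam • (1 : Matrix (Fin m) (Fin m) ℂ) - Zc) c c' * d c' = 0
    simp only [Matrix.sub_apply, Matrix.smul_apply, one_apply, smul_eq_mul, mul_ite, mul_one, mul_zero,
      sub_mul, ite_mul, zero_mul, Finset.sum_sub_distrib, Finset.sum_ite_eq,
      Finset.mem_univ, if_pos, hZc, Matrix.map_apply]
    linear_combination -key
  have hdzero : d = 0 := by
    have hunit : IsUnit (lam • (1 : Matrix (Fin m) (Fin m) ℂ) - Zc) :=
      (Matrix.isUnit_iff_isUnit_det _).mpr (isUnit_iff_ne_zero.mpr hdet)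
    have hinj := Matrix.mulVec_injective_iff_isUnit.mpr hunit
    apply hinj
    rw [hAd, Matrix.mulVec_zero]
  have h0 := congrFun hdzero c0
  simp only [hd, Pi.zero_apply, sub_eq_zero] at h0
  exact h0
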